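/- Let E ⊂ ℤ^d be a finite set and u a function on Ē. Suppose max_E u = u(x₀) > max_{∂E} u for some x₀ ∈ E, and let R = (u(x₀) − max_{∂E} u)/(d·diam Ē) where diam is the ℓ^∞-diameter. Then the cube {s ∈ ℝ^d : |s|_∞ ≤ R} is contained in the union ⋃_{x∈E} I_u(x) of upper contact sets, where I_u(x) = {s ∈ ℝ^d : u(x) − s·x ≥ u(z) − s·z for all z ∈ Ē}. -/

import Mathlib

/-- Nearest neighbors in `ℤ^d` (i.e. `|x - y| = 1`). -/
def isNbr {d : ℕ} (x y : Fin d → ℤ) : Prop := (∑ j, (x j - y j).natAbs) = 1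

/-- The outer lattice boundary `∂E` of a set `E ⊆ ℤ^d`. -/
def bdry {d : ℕ} (E : Set (Fin d → ℤ)) : Set (Fin d → ℤ) :=
  {y | y ∉ E ∧ ∃ x ∈ E, isNbr x y}

/-- The upper contact set `I_u(x)`. -/
def contact {d : ℕ} (clE : Set (Fin d → ℤ)) (u : (Fin d → ℤ) → ℝ)
    (x : Fin d → ℤ) : Set (Fin d → ℝ) :=
  {s | ∀ z ∈ clE, u z - ∑ j, s j * (z j : ℝ) ≤ u x - ∑ j, s j * (x j : ℝ)}

/-- The `ℓ^∞`-diameter of a finite subset of `ℤ^d`. -/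
def ellInfDiam {d : ℕ} (F : Finset (Fin d → ℤ)) : ℕ :=
  (F ×ˢ F).sup fun p => Finset.univ.sup fun j => (p.1 j - p.2 j).natAbs

/-- If `u` attains over `Ē = E ∪ ∂E` a maximum `u(x₀)`, `x₀ ∈ E`, exceeding its maximum `M`
over `∂E`, then the cube `{|s|_∞ ≤ R}` with `R = (u(x₀) - M)/(d · diam Ē)` is contained in
the union of the upper contact sets `⋃_{x ∈ E} I_u(x)`. -/
theorem stmt14 {d : ℕ} (hd : 1 ≤ d)
    (E F bF : Finset (Fin d → ℤ))
    (hF : (↑F : Set (Fin d → ℤ)) = ↑E ∪ bdry (↑E))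
    (hbF : (↑bF : Set (Fin d → ℤ)) = bdry (↑E))
    (hbne : bF.Nonempty)
    (u : (Fin d → ℤ) → ℝ) (x₀ : Fin d → ℤ) (hx₀ : x₀ ∈ E)
    (hmax : ∀ x ∈ E, u x ≤ u x₀)
    (hstrict : bF.sup' hbne u < u x₀) :
    {s : Fin d → ℝ |
        ∀ j, |s j| ≤ (u x₀ - bF.sup' hbne u) / (d * (ellInfDiam F : ℝ))} ⊆
      ⋃ x ∈ E, contact (↑F) u x := by
  intro s hs
  simp only [Set.mem_setOf_eq] at hs
  set M := bF.sup' hbne u with hM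
  have hx₀F : x₀ ∈ F := by
    have : (x₀ : Fin d → ℤ) ∈ (↑F : Set (Fin d → ℤ)) := by
      rw [hF]; exact Or.inl (by exact_mod_cast hx₀)
    exact_mod_cast this
  obtain ⟨y, hyF, hy⟩ :=
    F.exists_max_image (fun z => u z - ∑ j, s j * (z j : ℝ)) ⟨x₀, hx₀F⟩
  by_cases hyE : y ∈ E
  · exact Set.mem_iUnion₂.mpr ⟨y, hyE, fun z hz => hy z hz⟩
  · have hybd : y ∈ bdry (↑E : Set (Fin d → ℤ)) := by
      have h1 : y ∈ (↑F : Set (Fin d → ℤ)) := hyF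
      rw [hF] at h1
      rcases h1 with h | h
      · exact absurd (by exact_mod_cast h) hyE
      · exact h
    have hybF : y ∈ bF := by
      have : y ∈ (↑bF : Set (Fin d → ℤ)) := by rw [hbF]; exact hybd
      exact_mod_cast this
    have huyM : u y ≤ M := Finset.le_sup' u hybF
    have hyne : y ≠ x₀ := fun h => hyE (h ▸ hx₀)
    have hDj : ∀ j, ((x₀ j - y j).natAbs : ℝ) ≤ (ellInfDiam F : ℝ) := by
      intro j
      have hmem : (x₀, y) ∈ F ×ˢ F := Finset.mem_product.mpr ⟨hx₀F, hyF⟩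
      have h1 : (x₀ j - y j).natAbs ≤
          Finset.univ.sup fun j => (x₀ j - y j).natAbs :=
        Finset.le_sup (f := fun k => (x₀ k - y k).natAbs) (Finset.mem_univ j)
      have h2 : (Finset.univ.sup fun j => (x₀ j - y j).natAbs) ≤ ellInfDiam F :=
        Finset.le_sup (f := fun p => Finset.univ.sup fun j => (p.1 j - p.2 j).natAbs) hmem
      exact_mod_cast le_trans h1 h2
    have hD1 : 1 ≤ ellInfDiam F := by
      obtain ⟨j, hj⟩ := Function.ne_iff.mp hyne
      have h1 : 1 ≤ (x₀ j - y j).natAbs := by omega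
      have h2 := hDj j
      have h3 : ((x₀ j - y j).natAbs : ℝ) ≤ (ellInfDiam F : ℝ) := h2
      exact_mod_cast le_trans (by exact_mod_cast h1 : (1:ℝ) ≤ ((x₀ j - y j).natAbs : ℝ)) h3
    have hdD : (0:ℝ) < (d : ℝ) * (ellInfDiam F : ℝ) := by
      have : (1:ℝ) ≤ (d:ℝ) := by exact_mod_cast hd
      have : (1:ℝ) ≤ (ellInfDiam F : ℝ) := by exact_mod_cast hD1
      nlinarith [(show (1:ℝ) ≤ (d:ℝ) by exact_mod_cast hd)]
    have hc : 0 < u x₀ - M := by linarith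
    have habs : ∀ j, |(x₀ j : ℝ) - (y j : ℝ)| ≤ (ellInfDiam F : ℝ) := by
      intro j
      have : |(x₀ j : ℝ) - (y j : ℝ)| = ((x₀ j - y j).natAbs : ℝ) := by
        rw [Nat.cast_natAbs]
        push_cast
        simp [abs_sub_comm]
      rw [this]; exact hDj j
    have hsum : ∑ j, s j * ((x₀ j : ℝ) - (y j : ℝ)) ≤ u x₀ - M := by
      have step1 : ∑ j, s j * ((x₀ j : ℝ) - (y j : ℝ)) ≤
          ∑ j : Fin d, ((u x₀ - M) / ((d:ℝ) * (ellInfDiam F : ℝ))) * (ellInfDiam F : ℝ) := by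
        apply Finset.sum_le_sum
        intro j _
        calc s j * ((x₀ j : ℝ) - (y j : ℝ)) ≤ |s j * ((x₀ j : ℝ) - (y j : ℝ))| :=
              le_abs_self _
          _ = |s j| * |(x₀ j : ℝ) - (y j : ℝ)| := abs_mul _ _
          _ ≤ ((u x₀ - M) / ((d:ℝ) * (ellInfDiam F : ℝ))) * (ellInfDiam F : ℝ) := by
              apply mul_le_mul (hs j) (habs j) (abs_nonneg _)
              positivity
      have step2 : ∑ j : Fin d, ((u x₀ - M) / ((d:ℝ) * (ellInfDiam F : ℝ)))
            * (ellInfDiam F : ℝ)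
          = u x₀ - M := by
        rw [Finset.sum_const, Finset.card_univ, Fintype.card_fin]
        have hd0 : (d:ℝ) ≠ 0 := by exact_mod_cast (by omega : d ≠ 0)
        have hD0 : (ellInfDiam F : ℝ) ≠ 0 := by exact_mod_cast (by omega : ellInfDiam F ≠ 0)
        field_simp
        ring_nf
        rw [mul_inv_cancel_right₀ hd0, mul_inv_cancel_right₀ hd0]
      linarith
    have hx₀max : u y - ∑ j, s j * (y j : ℝ) ≤ u x₀ - ∑ j, s j * (x₀ j : ℝ) := by
      have hsplit : ∑ j, s j * ((x₀ j : ℝ)) - ∑ j, s j * ((y j : ℝ))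
          = ∑ j, s j * ((x₀ j : ℝ) - (y j : ℝ)) := by
        rw [← Finset.sum_sub_distrib]
        apply Finset.sum_congr rfl
        intro j _; ring
      linarith [hsum, huyM, hsplit.symm ▸ hsum]
    exact Set.mem_iUnion₂.mpr ⟨x₀, hx₀, fun z hz => le_trans (hy z hz) hx₀max⟩
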